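/- Let V be a finite totally ordered set and let Q be a partial quasi-pairing of V, and set T := Inv(underline(V), Q). If the quasi-pairing Q is reducible (i.e., some nontrivial interval of ∪Q is a union of blocks of the partition Q_part), then the three tournaments T, T − v_Q^-, and T − v_Q^+ are all decomposable. -/

import Mathlib

open Set

/-- The arc relation of the tournament `Inv(underline(V), P)` obtained from the
transitive tournament on a linearly ordered type by reversing the arcs `(x,y)`
with `{x,y} ∈ P`. -/
def InvArc {α : Type*} [LinearOrder α] (P : Set (Set α)) (x y : α) : Prop :=
  (x < y ∧ ({x, y} : Set α) ∉ P) ∨ (y < x ∧ ({x, y} : Set α) ∈ P)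

/-- `M` is a module of the subtournament of `Inv(·, P)` induced on the vertex set `W`. -/
def IsModuleOn {α : Type*} [LinearOrder α] (P : Set (Set α)) (W M : Set α) : Prop :=
  M ⊆ W ∧ ∀ v ∈ W, v ∉ M →
    (∀ x ∈ M, InvArc P v x) ∨ (∀ x ∈ M, InvArc P x v)

/-- A subset of the vertex set `W` is trivial if it is empty, a singleton, or all of `W`. -/
def IsTrivialSubset {α : Type*} (W M : Set α) : Prop :=
  M = ∅ ∨ (∃ a, M = {a}) ∨ M = W

/-- A nontrivial module of the tournament `Inv(·, P)` induced on `W`. -/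
def IsNontrivialModuleOn {α : Type*} [LinearOrder α] (P : Set (Set α)) (W M : Set α) : Prop :=
  IsModuleOn P W M ∧ ¬ IsTrivialSubset W M

/-- The tournament `Inv(·, P)` induced on `W` is indecomposable: all its modules are trivial. -/
def IndecomposableOn {α : Type*} [LinearOrder α] (P : Set (Set α)) (W : Set α) : Prop :=
  ∀ M : Set α, IsModuleOn P W M → IsTrivialSubset W M

/-- The tournament `Inv(·, P)` induced on `W` is decomposable: it has a nontrivial module. -/
def DecomposableOn {α : Type*} [LinearOrder α] (P : Set (Set α)) (W : Set α) : Prop :=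
  ∃ M : Set α, IsNontrivialModuleOn P W M

/-- A co-module of the tournament `Inv(·, P)` on `W`: a subset `M` of `W` such that
`M` or `W ∖ M` is a nontrivial module. -/
def IsCoModuleOn {α : Type*} [LinearOrder α] (P : Set (Set α)) (W M : Set α) : Prop :=
  M ⊆ W ∧ (IsNontrivialModuleOn P W M ∨ IsNontrivialModuleOn P W (W \ M))

/-- `mc(underline(W))`: the family of minimal co-modules of the transitive tournament on `W`
(a minimal co-module contains no other co-module). -/
def mcOn {α : Type*} [LinearOrder α] (W : Set α) : Set (Set α) :=
  {M | IsCoModuleOn (∅ : Set (Set α)) W M ∧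
    ∀ C : Set α, IsCoModuleOn (∅ : Set (Set α)) W C → C ⊆ M → C = M}

/-- `S` is a transversal of the family `F`: it meets every member of `F`. -/
def TransversalOf {α : Type*} (S : Set α) (F : Set (Set α)) : Prop :=
  ∀ C ∈ F, (S ∩ C).Nonempty

/-- A partial pairing of `V`: a set of pairwise disjoint 2-element subsets of `V`. -/
def IsPartialPairingOn {α : Type*} (V : Set α) (P : Set (Set α)) : Prop :=
  (∀ B ∈ P, B ⊆ V ∧ B.ncard = 2) ∧
  ∀ B ∈ P, ∀ C ∈ P, B ≠ C → Disjoint B C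

/-- `I` is an interval of the totally ordered set `X`: every element of `X ∖ I` is greater
than all elements of `I` or smaller than all of them. -/
def IsIntervalOf {α : Type*} [LinearOrder α] (X I : Set α) : Prop :=
  I ⊆ X ∧ ∀ v ∈ X \ I, (∀ i ∈ I, v < i) ∨ (∀ i ∈ I, i < v)

/-- A nontrivial interval of `X`. -/
def IsNontrivialIntervalOf {α : Type*} [LinearOrder α] (X I : Set α) : Prop :=
  IsIntervalOf X I ∧ ¬ IsTrivialSubset X I

/-- A family of blocks `P` on the totally ordered set `X` is irreducible if no nontrivial
interval of `X` is a union of blocks of `P`. -/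
def IrreducibleOn {α : Type*} [LinearOrder α] (X : Set α) (P : Set (Set α)) : Prop :=
  ∀ R ⊆ P, ¬ IsNontrivialIntervalOf X (⋃₀ R)

/-- A partial quasi-pairing of `V`: a set `Q` of `m+1` two-element subsets of `V` (`m ≥ 1`)
whose union has size `2m+1`. -/
def IsPartialQuasiPairingOn {α : Type*} (V : Set α) (Q : Set (Set α)) : Prop :=
  (∀ B ∈ Q, B ⊆ V ∧ B.ncard = 2) ∧
  ∃ m : ℕ, 1 ≤ m ∧ (⋃₀ Q).ncard = 2 * m + 1 ∧ Q.ncard = m + 1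

/-- The distinguished data of a quasi-pairing `Q`: `vh = v̂_Q` is the element lying in the two
blocks `{vh, vm}` and `{vh, vp}` of `Q`, with `vm = v_Q^- < v_Q^+ = vp`. -/
def QPData {α : Type*} [LinearOrder α] (Q : Set (Set α)) (vh vm vp : α) : Prop :=
  ({vh, vm} : Set α) ∈ Q ∧ ({vh, vp} : Set α) ∈ Q ∧ vm < vp

/-- `Q_part`: the partition of `⋃₀ Q` obtained from `Q` by merging its two intersecting
blocks into `B_Q = {v̂_Q, v_Q^-, v_Q^+}`. -/
def QPart {α : Type*} [LinearOrder α] (Q : Set (Set α)) (vh vm vp : α) : Set (Set α) :=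
  (Q \ {({vh, vm} : Set α), ({vh, vp} : Set α)}) ∪ {({vh, vm, vp} : Set α)}


private lemma aux_sUnion_ncard_le {α : Type*} (s : Finset (Set α)) :
    (⋃₀ (s : Set (Set α))).ncard ≤ ∑ B ∈ s, B.ncard := by
  classical
  induction s using Finset.induction_on with
  | empty => simp
  | @insert B t hBt ih =>
      rw [Finset.coe_insert, Set.sUnion_insert, Finset.sum_insert hBt]
      exact (Set.ncard_union_le _ _).trans (Nat.add_le_add_left ih _)

private lemma aux_strict {α : Type*} (s : Finset (Set α)) (hfin : ∀ B ∈ s, B.Finite)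
    {B C : Set α} (hB : B ∈ s) (hC : C ∈ s) (hne : B ≠ C) {x : α}
    (hxB : x ∈ B) (hxC : x ∈ C) :
    (⋃₀ (s : Set (Set α))).ncard + 1 ≤ ∑ D ∈ s, D.ncard := by
  classical
  have hBe : B ∈ s.erase C := Finset.mem_erase.2 ⟨hne, hB⟩
  have hU : ⋃₀ (s : Set (Set α)) =
      (⋃₀ ((s.erase C : Finset (Set α)) : Set (Set α))) ∪ (C \ {x}) := by
    ext y
    constructor
    · rintro ⟨D, hD, hyD⟩
      by_cases hDC : D = C
      · subst hDC
        by_cases hyx : y = x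
        · exact Or.inl ⟨B, by exact_mod_cast hBe, hyx ▸ hxB⟩
        · exact Or.inr ⟨hyD, hyx⟩
      · exact Or.inl ⟨D, by exact_mod_cast Finset.mem_erase.2 ⟨hDC, hD⟩, hyD⟩
    · rintro (⟨D, hD, hyD⟩ | ⟨hyC, -⟩)
      · exact ⟨D, by exact_mod_cast Finset.mem_of_mem_erase (by exact_mod_cast hD), hyD⟩
      · exact ⟨C, hC, hyC⟩
  have hCfin : C.Finite := hfin C hC
  have h1 : (⋃₀ (s : Set (Set α))).ncard ≤
      (⋃₀ ((s.erase C : Finset (Set α)) : Set (Set α))).ncard + (C \ {x}).ncard := by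
    rw [hU]; exact Set.ncard_union_le _ _
  have h2 : (C \ {x}).ncard = C.ncard - 1 := Set.ncard_diff_singleton_of_mem hxC
  have h3 : 1 ≤ C.ncard := (Set.ncard_pos hCfin).2 ⟨x, hxC⟩
  have h4 := aux_sUnion_ncard_le (s.erase C)
  have h5 : ∑ D ∈ s.erase C, D.ncard + C.ncard = ∑ D ∈ s, D.ncard :=
    Finset.sum_erase_add s _ hC
  omega

/-- Let `V` be a finite totally ordered set, `Q` a partial
quasi-pairing of `V` with distinguished data `(vh, vm, vp)`, and
`T := Inv(underline(V), Q)`. If the quasi-pairing `Q` is reducible, then the three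
tournaments `T`, `T − v_Q^-`, and `T − v_Q^+` are all decomposable. -/
theorem stmt_12 {α : Type*} [LinearOrder α] (V : Set α) (hVfin : V.Finite)
    (Q : Set (Set α)) (hQ : IsPartialQuasiPairingOn V Q)
    (vh vm vp : α) (hdata : QPData Q vh vm vp)
    (hred : ¬ IrreducibleOn (⋃₀ Q) (QPart Q vh vm vp)) :
    DecomposableOn Q V ∧ DecomposableOn Q (V \ {vm}) ∧ DecomposableOn Q (V \ {vp}) := by
  classical
  obtain ⟨hQblocks, m, hm1, hXcard, hQcard⟩ := hQ
  obtain ⟨hA1, hA2, hmp⟩ := hdata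
  -- notation
  have hXV : (⋃₀ Q) ⊆ V := Set.sUnion_subset fun B hB => (hQblocks B hB).1
  have hXfin : (⋃₀ Q).Finite := hVfin.subset hXV
  have hQfin : Q.Finite := by
    rcases Q.finite_or_infinite with h | h
    · exact h
    · rw [h.ncard] at hQcard; omega
  have hvhm : vh ≠ vm := by
    intro h
    have h2 := (hQblocks _ hA1).2
    rw [h, Set.pair_eq_singleton, Set.ncard_singleton] at h2
    omega
  have hvhp : vh ≠ vp := by
    intro h
    have h2 := (hQblocks _ hA2).2
    rw [h, Set.pair_eq_singleton, Set.ncard_singleton] at h2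
    omega
  have hmvp : vm ≠ vp := ne_of_lt hmp
  have hA12 : ({vh, vm} : Set α) ≠ ({vh, vp} : Set α) := by
    intro h
    have : vm ∈ ({vh, vp} : Set α) := h ▸ (by simp : vm ∈ ({vh, vm} : Set α))
    rcases this with h' | h'
    · exact hvhm h'.symm
    · exact hmvp h'
  have hvmX : vm ∈ ⋃₀ Q := ⟨_, hA1, by simp⟩
  have hvpX : vp ∈ ⋃₀ Q := ⟨_, hA2, by simp⟩
  have hvhX : vh ∈ ⋃₀ Q := ⟨_, hA1, by simp⟩
  have hB3P : ({vh, vm, vp} : Set α) ∈ QPart Q vh vm vp := Or.inr rfl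
  have hB3sub : ({vh, vm, vp} : Set α) ⊆ ⋃₀ Q := by
    intro z hz
    rcases hz with h | h | h
    · exact h ▸ hvhX
    · exact h ▸ hvmX
    · exact h ▸ hvpX
  have hUP : ⋃₀ (QPart Q vh vm vp) = ⋃₀ Q := by
    apply subset_antisymm
    · apply Set.sUnion_subset
      rintro B (⟨hBQ, -⟩ | hB)
      · exact Set.subset_sUnion_of_mem hBQ
      · rw [Set.mem_singleton_iff] at hB
        exact hB ▸ hB3sub
    · apply Set.sUnion_subset
      intro B hBQ
      by_cases h1 : B = ({vh, vm} : Set α)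
      · refine subset_trans ?_ (Set.subset_sUnion_of_mem hB3P)
        rw [h1]; intro z hz
        rcases hz with h | h
        · exact Or.inl h
        · exact Or.inr (Or.inl h)
      · by_cases h2 : B = ({vh, vp} : Set α)
        · refine subset_trans ?_ (Set.subset_sUnion_of_mem hB3P)
          rw [h2]; intro z hz
          rcases hz with h | h
          · exact Or.inl h
          · exact Or.inr (Or.inr h)
        · exact Set.subset_sUnion_of_mem (Or.inl ⟨hBQ, by simp [h1, h2]⟩)
  have hPsub : ∀ B ∈ QPart Q vh vm vp, B ⊆ ⋃₀ Q := fun B hB =>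
    hUP ▸ Set.subset_sUnion_of_mem hB
  -- counting: blocks of QPart are pairwise disjoint
  have hB3card : ({vh, vm, vp} : Set α).ncard = 3 := by
    rw [Set.ncard_insert_of_notMem (by simp [hvhm, hvhp])
      ((Set.finite_singleton vp).insert vm), Set.ncard_pair hmvp]
  have hB3notQ : ({vh, vm, vp} : Set α) ∉ Q := by
    intro h
    have := (hQblocks _ h).2
    rw [hB3card] at this
    omega
  -- the finset of blocks of QPart
  have hQ0fin : (Q \ {({vh, vm} : Set α), ({vh, vp} : Set α)}).Finite :=
    hQfin.subset Set.diff_subset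
  set s0 : Finset (Set α) := hQ0fin.toFinset with hs0def
  set s : Finset (Set α) := insert ({vh, vm, vp} : Set α) s0 with hsdef
  have hs_coe : (s : Set (Set α)) = QPart Q vh vm vp := by
    rw [hsdef, Finset.coe_insert, hs0def, Set.Finite.coe_toFinset, QPart,
      Set.union_singleton]
  have hB3nots0 : ({vh, vm, vp} : Set α) ∉ s0 := by
    rw [hs0def, Set.Finite.mem_toFinset]
    exact fun h => hB3notQ h.1
  have hpairsub : ({({vh, vm} : Set α), ({vh, vp} : Set α)} : Set (Set α)) ⊆ Q := by
    rintro B (h | h)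
    · exact h ▸ hA1
    · exact h ▸ hA2
  have hs0card : s0.card = m - 1 := by
    have h1 : (Q \ {({vh, vm} : Set α), ({vh, vp} : Set α)}).ncard
        = Q.ncard - ({({vh, vm} : Set α), ({vh, vp} : Set α)} : Set (Set α)).ncard :=
      Set.ncard_diff hpairsub ((Set.finite_singleton _).insert _)
    rw [Set.ncard_pair hA12, hQcard] at h1
    rw [hs0def, ← Set.ncard_eq_toFinset_card _ hQ0fin, h1]
    omega
  have hsum : ∑ D ∈ s, D.ncard = 2 * m + 1 := by
    rw [hsdef, Finset.sum_insert hB3nots0, hB3card]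
    have h2 : ∑ D ∈ s0, D.ncard = s0.card * 2 := by
      apply Finset.sum_const_nat
      intro B hB
      rw [hs0def, Set.Finite.mem_toFinset] at hB
      exact (hQblocks B hB.1).2
    rw [h2, hs0card]
    omega
  have hsfin : ∀ B ∈ s, B.Finite := by
    intro B hB
    have : B ∈ QPart Q vh vm vp := by rw [← hs_coe]; exact_mod_cast hB
    exact hXfin.subset (hPsub B this)
  have hUscard : (⋃₀ (s : Set (Set α))).ncard = 2 * m + 1 := by
    rw [hs_coe, hUP, hXcard]
  -- pairwise disjointness of QPart
  have hD : ∀ P1 ∈ QPart Q vh vm vp, ∀ P2 ∈ QPart Q vh vm vp, P1 ≠ P2 →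
      ∀ x, x ∈ P1 → x ∈ P2 → False := by
    intro P1 h1 P2 h2 hne x hx1 hx2
    have hm1' : P1 ∈ s := by rw [← Finset.mem_coe, hs_coe]; exact h1
    have hm2' : P2 ∈ s := by rw [← Finset.mem_coe, hs_coe]; exact h2
    have := aux_strict s hsfin hm1' hm2' hne hx1 hx2
    rw [hUscard, hsum] at this
    omega
  -- extract the reducing interval
  rw [IrreducibleOn] at hred
  push_neg at hred
  obtain ⟨R, hRP, hRint⟩ := hred
  obtain ⟨⟨hIX, hIint⟩, hInontriv⟩ := hRint
  rw [IsTrivialSubset] at hInontriv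
  push_neg at hInontriv
  obtain ⟨hIne, hIsing, hIneX⟩ := hInontriv
  obtain ⟨a, ha⟩ := hIne
  obtain ⟨b, hb, hba⟩ : ∃ b ∈ ⋃₀ R, b ≠ a := by
    by_contra h
    push_neg at h
    exact hIsing a (Set.eq_singleton_iff_unique_mem.2 ⟨ha, h⟩)
  obtain ⟨y, hyX, hyI⟩ := Set.exists_of_ssubset (hIX.ssubset_of_ne hIneX)
  -- blocks of QPart meeting I are inside I
  have hblock : ∀ x ∈ ⋃₀ R, ∀ B ∈ QPart Q vh vm vp, x ∈ B → B ⊆ ⋃₀ R := by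
    intro x hx B hBP hxB
    obtain ⟨P1, hP1R, hxP1⟩ := hx
    have hBP1 : B = P1 := by
      by_contra hne
      exact hD B hBP P1 (hRP hP1R) hne x hxB hxP1
    exact hBP1 ▸ Set.subset_sUnion_of_mem hP1R
  -- no block of Q crosses from I to outside I
  have hcross : ∀ v, ∀ x ∈ ⋃₀ R, ({v, x} : Set α) ∈ Q → v ∈ ⋃₀ R := by
    intro v x hx hvx
    by_cases h1 : ({v, x} : Set α) = ({vh, vm} : Set α) ∨
        ({v, x} : Set α) = ({vh, vp} : Set α)
    · have hsub : ({v, x} : Set α) ⊆ ({vh, vm, vp} : Set α) := by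
        rcases h1 with h | h
        · rw [h]
          rintro z (hz | hz)
          · exact Or.inl hz
          · exact Or.inr (Or.inl hz)
        · rw [h]
          rintro z (hz | hz)
          · exact Or.inl hz
          · exact Or.inr (Or.inr hz)
      exact hblock x hx _ hB3P (hsub (by simp)) (hsub (by simp))
    · push_neg at h1
      have hmem : ({v, x} : Set α) ∈ QPart Q vh vm vp :=
        Or.inl ⟨hvx, by simp [h1.1, h1.2]⟩
      exact hblock x hx _ hmem (by simp) (by simp)
  -- the convex hull of I inside V
  set J : Set α := {z ∈ V | ∃ i ∈ ⋃₀ R, ∃ j ∈ ⋃₀ R, i ≤ z ∧ z ≤ j} with hJdef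
  have hIV : ⋃₀ R ⊆ V := hIX.trans hXV
  have hIJ : ⋃₀ R ⊆ J := fun i hi => ⟨hIV hi, i, hi, i, hi, le_rfl, le_rfl⟩
  have hJV : J ⊆ V := fun z hz => hz.1
  have hXJ : ∀ z ∈ ⋃₀ Q, z ∈ J → z ∈ ⋃₀ R := by
    intro z hzX hzJ
    by_contra hz
    obtain ⟨-, i, hi, j, hj, hiz, hzj⟩ := hzJ
    rcases hIint z ⟨hzX, hz⟩ with h | h
    · exact absurd hiz (not_le.2 (h i hi))
    · exact absurd hzj (not_le.2 (h j hj))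
  have hyJ : y ∉ J := fun h => hyI (hXJ y hyX h)
  have huniform : ∀ v ∈ V, v ∉ J → (∀ z ∈ J, v < z) ∨ (∀ z ∈ J, z < v) := by
    intro v hv hvJ
    rcases lt_or_ge v a with h | h
    · left
      intro z hzJ
      obtain ⟨-, i, hi, j, hj, hiz, hzj⟩ := hzJ
      by_contra hle
      push_neg at hle
      exact hvJ ⟨hv, i, hi, a, ha, hiz.trans hle, le_of_lt h⟩
    · right
      intro z hzJ
      obtain ⟨-, i, hi, j, hj, hiz, hzj⟩ := hzJ
      by_contra hle
      push_neg at hle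
      exact hvJ ⟨hv, a, ha, j, hj, h, hle.trans hzj⟩
  have hnoQ : ∀ v ∈ V, v ∉ J → ∀ z ∈ J, ({v, z} : Set α) ∉ Q ∧ ({z, v} : Set α) ∉ Q := by
    intro v hv hvJ z hz
    have key : ({v, z} : Set α) ∈ Q → False := by
      intro h
      have hzX : z ∈ ⋃₀ Q := ⟨_, h, by simp⟩
      exact hvJ (hIJ (hcross v z (hXJ z hzX hz) h))
    exact ⟨key, fun h => key (by rwa [Set.pair_comm])⟩
  have hmodule : ∀ W, W ⊆ V → IsModuleOn Q W (J ∩ W) := by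
    intro W hWV
    refine ⟨Set.inter_subset_right, ?_⟩
    intro v hvW hvM
    have hvV := hWV hvW
    have hvJ : v ∉ J := fun h => hvM ⟨h, hvW⟩
    rcases huniform v hvV hvJ with h | h
    · exact Or.inl fun z hz => Or.inl ⟨h z hz.1, (hnoQ v hvV hvJ z hz.1).1⟩
    · exact Or.inr fun z hz => Or.inl ⟨h z hz.1, (hnoQ v hvV hvJ z hz.1).2⟩
  have hnontriv : ∀ W : Set α, ∀ a' b' y' : α, a' ∈ ⋃₀ R → b' ∈ ⋃₀ R → a' ≠ b' →
      a' ∈ W → b' ∈ W → y' ∉ J → y' ∈ W → ¬ IsTrivialSubset W (J ∩ W) := by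
    intro W a' b' y' ha' hb' hab haW hbW hy'J hy'W htriv
    have haM : a' ∈ J ∩ W := ⟨hIJ ha', haW⟩
    have hbM : b' ∈ J ∩ W := ⟨hIJ hb', hbW⟩
    rcases htriv with h | ⟨c, hc⟩ | h
    · rw [h] at haM; exact haM
    · rw [hc] at haM hbM
      exact hab (haM.trans hbM.symm)
    · rw [← h] at hy'W
      exact hy'J hy'W.1
  -- vm ∈ I implies all of B3 ⊆ I, etc.
  have habsorb : ∀ w, w ∈ ({vh, vm, vp} : Set α) → w ∈ ⋃₀ R →
      ({vh, vm, vp} : Set α) ⊆ ⋃₀ R := fun w hw hwI => hblock w hwI _ hB3P hw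
  refine ⟨?_, ?_, ?_⟩
  · exact ⟨J ∩ V, hmodule V le_rfl,
      hnontriv V a b y ha hb (Ne.symm hba) (hIV ha) (hIV hb) hyJ (hXV hyX)⟩
  · by_cases hvmI : vm ∈ ⋃₀ R
    · have hB3I := habsorb vm (by simp) hvmI
      have hyvm : y ≠ vm := fun h => hyI (h ▸ hvmI)
      refine ⟨J ∩ (V \ {vm}), hmodule _ Set.diff_subset,
        hnontriv _ vh vp y (hB3I (by simp)) (hB3I (by simp)) hvhp
          ⟨hXV hvhX, by simp [hvhm]⟩ ⟨hXV hvpX, by simp [hmvp.symm]⟩ hyJ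
          ⟨hXV hyX, by simp [hyvm]⟩⟩
    · have hvhI : vh ∉ ⋃₀ R := fun h => hvmI (habsorb vh (by simp) h (by simp))
      have hvhJ : vh ∉ J := fun h => hvhI (hXJ vh hvhX h)
      have havm : a ≠ vm := fun h => hvmI (h ▸ ha)
      have hbvm : b ≠ vm := fun h => hvmI (h ▸ hb)
      refine ⟨J ∩ (V \ {vm}), hmodule _ Set.diff_subset,
        hnontriv _ a b vh ha hb (Ne.symm hba)
          ⟨hIV ha, by simp [havm]⟩ ⟨hIV hb, by simp [hbvm]⟩ hvhJ
          ⟨hXV hvhX, by simp [hvhm]⟩⟩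
  · by_cases hvpI : vp ∈ ⋃₀ R
    · have hB3I := habsorb vp (by simp) hvpI
      have hyvp : y ≠ vp := fun h => hyI (h ▸ hvpI)
      refine ⟨J ∩ (V \ {vp}), hmodule _ Set.diff_subset,
        hnontriv _ vh vm y (hB3I (by simp)) (hB3I (by simp)) hvhm
          ⟨hXV hvhX, by simp [hvhp]⟩ ⟨hXV hvmX, by simp [hmvp]⟩ hyJ
          ⟨hXV hyX, by simp [hyvp]⟩⟩
    · have hvhI : vh ∉ ⋃₀ R := fun h => hvpI (habsorb vh (by simp) h (by simp))
      have hvhJ : vh ∉ J := fun h => hvhI (hXJ vh hvhX h)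
      have havp : a ≠ vp := fun h => hvpI (h ▸ ha)
      have hbvp : b ≠ vp := fun h => hvpI (h ▸ hb)
      refine ⟨J ∩ (V \ {vp}), hmodule _ Set.diff_subset,
        hnontriv _ a b vh ha hb (Ne.symm hba)
          ⟨hIV ha, by simp [havp]⟩ ⟨hIV hb, by simp [hbvp]⟩ hvhJ
          ⟨hXV hvhX, by simp [hvhp]⟩⟩
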